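/- Let X be a set, O a measurable output space, and let M be a randomized algorithm mapping datasets in X^n to probability measures on O that is (ε,δ)-differentially private. Fix a dataset (X_1,…,X_n) and a measurable set G ⊆ O of good outputs, and suppose M(X_1,…,X_n) assigns probability at least 1−β to G. Then for every dataset (X_1',…,X_n') that differs from (X_1,…,X_n) in at most m entries, M(X_1',…,X_n') assigns probability at least 1 − e^{εm}(β + mδ) to G. In particular, taking m = ηn with η = O(min(log(1/β)/(εn), log(1/δ)/(εn + log n))), the mechanism outputs a good output with probability at least 1 − β^{Ω(1)} on any η-corrupted dataset. -/

import Mathlib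

open MeasureTheory
open scoped ENNReal

noncomputable section

/-- Two datasets are neighbors if they differ in at most one entry. -/
def Neighbors {X : Type*} {n : ℕ} (a b : Fin n → X) : Prop :=
  ∃ i : Fin n, ∀ j, j ≠ i → a j = b j

/-- `(ε,δ)`-differential privacy for a randomized algorithm mapping datasets in `X^n`
to probability measures on a measurable output space `O`. -/
def ApproxDP {X O : Type*} [MeasurableSpace O] {n : ℕ}
    (ε δ : ℝ) (M : (Fin n → X) → Measure O) : Prop :=
  ∀ a b, Neighbors a b → ∀ S : Set O, MeasurableSet S →
    M a S ≤ ENNReal.ofReal (Real.exp ε) * M b S + ENNReal.ofReal δ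

lemma group_privacy {X O : Type*} [MeasurableSpace O] {n : ℕ}
    (M : (Fin n → X) → Measure O) (ε δ : ℝ) (hε : 0 ≤ ε)
    (hDP : ApproxDP ε δ M) (S : Set O) (hS : MeasurableSet S) :
    ∀ m : ℕ, ∀ a b : Fin n → X, ({j : Fin n | a j ≠ b j}).ncard ≤ m →
      M b S ≤ (ENNReal.ofReal (Real.exp ε)) ^ m * M a S
        + (m : ℝ≥0∞) * (ENNReal.ofReal (Real.exp ε)) ^ m * ENNReal.ofReal δ := by
  set E := ENNReal.ofReal (Real.exp ε) with hE
  have hE1 : (1 : ℝ≥0∞) ≤ E := ENNReal.one_le_ofReal.2 (Real.one_le_exp hε)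
  intro m
  induction m with
  | zero =>
    intro a b hab
    have hfin : ({j : Fin n | a j ≠ b j}).Finite := Set.toFinite _
    have hempty : {j : Fin n | a j ≠ b j} = ∅ :=
      (Set.ncard_eq_zero hfin).mp (Nat.le_zero.mp hab)
    have hab' : a = b := by
      funext j
      by_contra h
      exact absurd (Set.eq_empty_iff_forall_notMem.mp hempty j) (by simp [h])
    simp [hab']
  | succ m ih =>
    intro a b hab
    by_cases hD : {j : Fin n | a j ≠ b j} = ∅
    · have hab' : a = b := by
        funext j
        by_contra h
        exact absurd (Set.eq_empty_iff_forall_notMem.mp hD j) (by simp [h])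
      have h1 : (1 : ℝ≥0∞) ≤ E ^ (m + 1) := one_le_pow_of_one_le' hE1 _
      calc M b S = 1 * M a S := by rw [hab', one_mul]
        _ ≤ E ^ (m + 1) * M a S := by gcongr
        _ ≤ E ^ (m + 1) * M a S + _ := le_self_add
    · obtain ⟨i, hi⟩ := Set.nonempty_iff_ne_empty.mpr hD
      set c : Fin n → X := Function.update b i (a i) with hc
      have hbc : Neighbors b c := by
        refine ⟨i, fun j hj => ?_⟩
        simp [hc, Function.update_of_ne hj]
      have hac : {j : Fin n | a j ≠ c j} ⊆ {j : Fin n | a j ≠ b j} \ {i} := by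
        intro j hj
        rcases eq_or_ne j i with rfl | hji
        · simp [hc] at hj
        · simp only [Set.mem_setOf_eq, hc, Function.update_of_ne hji] at hj
          exact ⟨hj, hji⟩
      have hcard : ({j : Fin n | a j ≠ c j}).ncard ≤ m := by
        have h1 : ({j : Fin n | a j ≠ b j} \ {i}).ncard
            = ({j : Fin n | a j ≠ b j}).ncard - 1 :=
          Set.ncard_diff_singleton_of_mem hi
        have h2 := Set.ncard_le_ncard hac (Set.toFinite _)
        have h3 : ({j : Fin n | a j ≠ b j}).ncard ≠ 0 := by
          intro h0
          exact hD ((Set.ncard_eq_zero (Set.toFinite _)).mp h0)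
        omega
      have step := hDP b c hbc S hS
      have ihc := ih a c hcard
      have hδ1 : ENNReal.ofReal δ ≤ E ^ (m + 1) * ENNReal.ofReal δ :=
        le_mul_of_one_le_left zero_le (one_le_pow_of_one_le' hE1 _)
      calc M b S ≤ E * M c S + ENNReal.ofReal δ := step
        _ ≤ E * (E ^ m * M a S + (m : ℝ≥0∞) * E ^ m * ENNReal.ofReal δ)
            + ENNReal.ofReal δ := by gcongr
        _ = E ^ (m + 1) * M a S + (m : ℝ≥0∞) * E ^ (m + 1) * ENNReal.ofReal δ
            + ENNReal.ofReal δ := by ring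
        _ ≤ E ^ (m + 1) * M a S + (m : ℝ≥0∞) * E ^ (m + 1) * ENNReal.ofReal δ
            + E ^ (m + 1) * ENNReal.ofReal δ := by gcongr
        _ = E ^ (m + 1) * M a S
            + ((m : ℕ) + 1 : ℝ≥0∞) * E ^ (m + 1) * ENNReal.ofReal δ := by ring
        _ = _ := by push_cast; ring

/-- Automatic robustness of `(ε,δ)`-DP mechanisms: if `M` is `(ε,δ)`-DP and puts mass at
least `1-β` on the good set `G` on input `x`, then on any input `x'` differing from `x` in
at most `m` entries, `M` puts mass at least `1 - e^{εm}(β + mδ)` on `G`. -/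
theorem stmt0 {X O : Type*} [MeasurableSpace O] {n : ℕ}
    (M : (Fin n → X) → Measure O) (hM : ∀ a, IsProbabilityMeasure (M a))
    (ε δ : ℝ) (hε : 0 ≤ ε) (hδ : 0 ≤ δ) (hDP : ApproxDP ε δ M)
    (x : Fin n → X) (G : Set O) (hG : MeasurableSet G)
    (β : ℝ) (hβ : 0 ≤ β) (hacc : ENNReal.ofReal (1 - β) ≤ M x G)
    (m : ℕ) (x' : Fin n → X)
    (hdiff : ({j : Fin n | x j ≠ x' j}).ncard ≤ m) :
    ENNReal.ofReal (1 - Real.exp (ε * m) * (β + m * δ)) ≤ M x' G := by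
  haveI := hM x
  haveI := hM x'
  set E := ENNReal.ofReal (Real.exp ε) with hE
  -- M x Gᶜ ≤ β
  have hxc : M x Gᶜ ≤ ENNReal.ofReal β := by
    have h1 : M x Gᶜ = 1 - M x G := by
      rw [measure_compl hG (measure_ne_top _ _), measure_univ]
    rw [h1]
    rcases le_total 1 β with hb | hb
    · calc (1 : ℝ≥0∞) - M x G ≤ 1 := tsub_le_self
        _ ≤ ENNReal.ofReal β := ENNReal.one_le_ofReal.2 hb
    · have : (1 : ℝ≥0∞) = ENNReal.ofReal (1 - β) + ENNReal.ofReal β := by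
        rw [← ENNReal.ofReal_add (by linarith) hβ]
        norm_num
      rw [tsub_le_iff_right, this, add_comm]
      exact add_le_add_right hacc _
  have hgp := group_privacy M ε δ hε hDP Gᶜ hG.compl m x x' hdiff
  have hx'c : M x' Gᶜ ≤ ENNReal.ofReal (Real.exp (ε * m) * (β + m * δ)) := by
    have key : ENNReal.ofReal (Real.exp (ε * m) * (β + m * δ))
        = E ^ m * ENNReal.ofReal β + (m : ℝ≥0∞) * E ^ m * ENNReal.ofReal δ := by
      rw [ENNReal.ofReal_mul (by positivity), ENNReal.ofReal_add hβ (by positivity),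
        ENNReal.ofReal_mul (by positivity), hE, ← ENNReal.ofReal_pow (Real.exp_nonneg _),
        ← Real.exp_nat_mul, mul_comm (m : ℝ) ε, ENNReal.ofReal_natCast]
      ring
    rw [key]
    calc M x' Gᶜ ≤ E ^ m * M x Gᶜ + (m : ℝ≥0∞) * E ^ m * ENNReal.ofReal δ := hgp
      _ ≤ E ^ m * ENNReal.ofReal β + (m : ℝ≥0∞) * E ^ m * ENNReal.ofReal δ := by gcongr
  have ht0 : 0 ≤ Real.exp (ε * m) * (β + m * δ) := by positivity
  calc ENNReal.ofReal (1 - Real.exp (ε * m) * (β + m * δ))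
      = 1 - ENNReal.ofReal (Real.exp (ε * m) * (β + m * δ)) := by
        rw [ENNReal.ofReal_sub 1 ht0, ENNReal.ofReal_one]
    _ ≤ M x' G := by
        rw [tsub_le_iff_right]
        calc (1 : ℝ≥0∞) = M x' G + M x' Gᶜ := by
              rw [measure_add_measure_compl hG, measure_univ]
          _ ≤ M x' G + ENNReal.ofReal (Real.exp (ε * m) * (β + m * δ)) := by gcongr
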